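/- arXiv:2005.02243 — 4 statements merged into one kernel-verified Lean document; each statement's English description precedes it below -/
import Mathlib

section
/- Let M be a closed subspace of the vector-valued Hardy space H²(𝔻, ℂ^m) such that not every function in M vanishes at 0. Then the subspace W = M ⊖ (M ∩ zH²(𝔻, ℂ^m)) satisfies 1 ≤ dim W ≤ m. -/
noncomputable section

open scoped ENNReal ComplexConjugate
open ContinuousLinearMap

abbrev Cm (m : ℕ) := EuclideanSpace ℂ (Fin m)
abbrev H2 (m : ℕ) := lp (fun _ : ℕ => Cm m) 2

namespace Hardy

variable {m r : ℕ}

lemma two_toReal : (2 : ℝ≥0∞).toReal = 2 := by norm_num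

def shiftFun (f : ℕ → Cm m) : ℕ → Cm m := fun n => match n with
  | 0 => 0
  | k + 1 => f k

lemma shift_memℓp (f : H2 m) : Memℓp (shiftFun (f : ∀ _, Cm m)) 2 := by
  rw [memℓp_gen_iff (by norm_num)]
  have hs : Summable fun n : ℕ => ‖(f : ∀ _, Cm m) n‖ ^ (2 : ℝ≥0∞).toReal :=
    (lp.memℓp f).summable (by norm_num)
  have : Summable fun n : ℕ =>
      ‖shiftFun (f : ∀ _, Cm m) (n + 1)‖ ^ (2 : ℝ≥0∞).toReal := hs
  exact (summable_nat_add_iff 1).mp this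

/-- The forward shift `S` on the vector-valued Hardy space (Taylor-coefficient model). -/
def S (m : ℕ) : H2 m →L[ℂ] H2 m :=
  LinearMap.mkContinuous
    { toFun := fun f => ⟨shiftFun (f : ∀ _, Cm m), shift_memℓp f⟩
      map_add' := by
        intro f g
        apply Subtype.ext
        have key : shiftFun (↑(f + g) : ∀ _, Cm m)
            = shiftFun (f : ∀ _, Cm m) + shiftFun (g : ∀ _, Cm m) := by
          funext n
          have h : (shiftFun (f : ∀ _, Cm m) + shiftFun (g : ∀ _, Cm m)) n
              = shiftFun (f : ∀ _, Cm m) n + shiftFun (g : ∀ _, Cm m) n := rfl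
          rw [h, lp.coeFn_add]
          cases n with
          | zero => simp [shiftFun]
          | succ k => simp [shiftFun]
        exact key
      map_smul' := by
        intro c f
        apply Subtype.ext
        have key : shiftFun (↑(c • f) : ∀ _, Cm m)
            = c • shiftFun (f : ∀ _, Cm m) := by
          funext n
          have h : (c • shiftFun (f : ∀ _, Cm m)) n
              = c • shiftFun (f : ∀ _, Cm m) n := rfl
          rw [h, lp.coeFn_smul]
          cases n with
          | zero => simp [shiftFun]
          | succ k => simp [shiftFun]
        exact key }
    1
    (by
      intro f
      simp only [one_mul]
      apply le_of_eq
      have h2 : (0:ℝ) < (2 : ℝ≥0∞).toReal := by norm_num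
      rw [lp.norm_eq_tsum_rpow h2, lp.norm_eq_tsum_rpow h2]
      congr 1
      have hsum : Summable fun n : ℕ =>
          ‖shiftFun (f : ∀ _, Cm m) n‖ ^ (2 : ℝ≥0∞).toReal := by
        rw [← memℓp_gen_iff (by norm_num)]; exact shift_memℓp f
      have key : ∑' n : ℕ, ‖shiftFun (f : ∀ _, Cm m) n‖ ^ (2 : ℝ≥0∞).toReal
          = ∑' n : ℕ, ‖(f : ∀ _, Cm m) n‖ ^ (2 : ℝ≥0∞).toReal := by
        rw [hsum.tsum_eq_zero_add]
        simp [shiftFun]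
      exact key)

/-- The backward shift `S*` (the adjoint of the forward shift). -/
def Sadj (m : ℕ) : H2 m →L[ℂ] H2 m := ContinuousLinearMap.adjoint (S m)

/-- `T` is a multiplier (multiplication by an operator-valued analytic function),
characterized by intertwining the shifts. -/
def IsMultiplier (T : H2 r →L[ℂ] H2 m) : Prop := S m ∘L T = T ∘L S r

/-- `T` is (the multiplication operator of) an inner multiplier: an isometric multiplier. -/
def IsInnerMultiplier (T : H2 r →L[ℂ] H2 m) : Prop :=
  (∀ f, ‖T f‖ = ‖f‖) ∧ IsMultiplier T

/-- The model space `K_Θ = H² ⊖ Θ H²`. -/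
def modelSpace (T : H2 r →L[ℂ] H2 m) : Submodule ℂ (H2 m) := (LinearMap.range (T : H2 r →ₗ[ℂ] H2 m))ᗮ

/-- The constant function with value `v` (Taylor coefficients `(v,0,0,…)`). -/
def const (v : Cm m) : H2 m := lp.single 2 0 v

/-- The constant function `eᵢ`. -/
def e (m : ℕ) (i : Fin m) : H2 m := const (EuclideanSpace.single i 1)

lemma coord_norm_le (x : Cm m) (i : Fin m) : ‖x i‖ ≤ ‖x‖ := by
  rw [EuclideanSpace.norm_eq]
  have h1 : ‖x i‖ = Real.sqrt (‖x i‖ ^ 2) := by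
    rw [Real.sqrt_sq (norm_nonneg _)]
  rw [h1]
  apply Real.sqrt_le_sqrt
  exact Finset.single_le_sum (f := fun j => ‖x j‖ ^ 2)
    (fun j _ => by positivity) (Finset.mem_univ i)

lemma coord_memℓp (i : Fin m) (f : H2 m) :
    Memℓp (fun n => EuclideanSpace.single (0 : Fin 1) ((f : ∀ _, Cm m) n i)) 2 := by
  rw [memℓp_gen_iff (by norm_num)]
  have hs : Summable fun n : ℕ => ‖(f : ∀ _, Cm m) n‖ ^ (2 : ℝ≥0∞).toReal :=
    (lp.memℓp f).summable (by norm_num)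
  apply Summable.of_nonneg_of_le (fun n => by positivity) _ hs
  intro n
  have : ‖EuclideanSpace.single (0 : Fin 1) ((f : ∀ _, Cm m) n i)‖
      = ‖(f : ∀ _, Cm m) n i‖ := by
    simp [EuclideanSpace.norm_single]
  rw [this]
  have h := coord_norm_le ((f : ∀ _, Cm m) n) i
  exact Real.rpow_le_rpow (norm_nonneg _) h (by norm_num)

/-- The `i`-th coordinate (column) of a `ℂᵐ`-valued Hardy space function, as a scalar
Hardy space function. -/
def coord (i : Fin m) (f : H2 m) : H2 1 :=
  ⟨fun n => EuclideanSpace.single (0 : Fin 1) ((f : ∀ _, Cm m) n i), coord_memℓp i f⟩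

/-- A multiplier on `H²(𝔻, ℂᵐ)` is diagonal, `Ψ = diag(ψ₁, …, ψ_m)`, with scalar
multipliers `ψᵢ` represented by the operators `t i`. -/
def IsDiagonal (T : H2 m →L[ℂ] H2 m) (t : Fin m → (H2 1 →L[ℂ] H2 1)) : Prop :=
  ∀ (f : H2 m) (i : Fin m), coord i (T f) = t i (coord i f)

/-- The analytic function on the disc associated to a scalar Hardy space element. -/
def toFun (f : H2 1) (z : ℂ) : ℂ := ∑' n : ℕ, ((f : ∀ _, Cm 1) n 0) * z ^ n

/-- `F` is a finite Blaschke product on the unit disc. -/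
def IsFiniteBlaschke (F : ℂ → ℂ) : Prop :=
  ∃ (k : ℕ) (c : ℂ) (a : Fin k → ℂ), ‖c‖ = 1 ∧ (∀ i, ‖a i‖ < 1) ∧
    ∀ z ∈ Metric.ball (0 : ℂ) 1,
      F z = c * ∏ i, (z - a i) / (1 - (starRingEnd ℂ) (a i) * z)

/-- `W = M ⊖ (M ∩ zH²)`. -/
def Wspace (M : Submodule ℂ (H2 m)) : Submodule ℂ (H2 m) :=
  M ⊓ (M ⊓ LinearMap.range (S m : H2 m →ₗ[ℂ] H2 m))ᗮ

/-- Evaluation of the 0-th Taylor coefficient, as a continuous linear map. -/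
def eval0 (m : ℕ) : H2 m →L[ℂ] Cm m :=
  LinearMap.mkContinuous
    { toFun := fun f => (f : ∀ _, Cm m) 0
      map_add' := by intro f g; simp [lp.coeFn_add]
      map_smul' := by intro c f; simp [lp.coeFn_smul] }
    1
    (fun f => by rw [one_mul]; exact lp.norm_apply_le_norm (by norm_num) f 0)

lemma eval0_apply (f : H2 m) : eval0 m f = (f : ∀ _, Cm m) 0 := rfl

lemma mem_range_S_iff (f : H2 m) :
    f ∈ LinearMap.range (S m : H2 m →ₗ[ℂ] H2 m) ↔ (f : ∀ _, Cm m) 0 = 0 := by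
  constructor
  · rintro ⟨g, rfl⟩
    rfl
  · intro h0
    have hmem : Memℓp (fun n => (f : ∀ _, Cm m) (n + 1)) 2 := by
      rw [memℓp_gen_iff (by norm_num)]
      have hs : Summable fun n : ℕ => ‖(f : ∀ _, Cm m) n‖ ^ (2 : ℝ≥0∞).toReal :=
        (lp.memℓp f).summable (by norm_num)
      exact (summable_nat_add_iff 1).mpr hs
    refine ⟨⟨fun n => (f : ∀ _, Cm m) (n + 1), hmem⟩, ?_⟩
    apply Subtype.ext
    funext n
    cases n with
    | zero => exact h0.symm
    | succ k => rfl

lemma isClosed_range_S : IsClosed ((LinearMap.range (S m : H2 m →ₗ[ℂ] H2 m) : Submodule ℂ (H2 m)) : Set (H2 m)) := by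
  have : ((LinearMap.range (S m : H2 m →ₗ[ℂ] H2 m) : Submodule ℂ (H2 m)) : Set (H2 m))
      = (eval0 m) ⁻¹' {0} := by
    ext f
    rw [SetLike.mem_coe, mem_range_S_iff]
    simp [eval0_apply]
  rw [this]
  exact isClosed_singleton.preimage (eval0 m).continuous

end Hardy
open Hardy in
/-- If `M` is a closed subspace of `H²(𝔻, ℂᵐ)` containing a function not vanishing at `0`,
then `W = M ⊖ (M ∩ zH²)` satisfies `1 ≤ dim W ≤ m`. -/
theorem stmt_1 (m : ℕ) (M : Submodule ℂ (H2 m)) (hclosed : IsClosed (M : Set (H2 m)))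
    (hnv : ∃ F ∈ M, (F : ∀ _ : ℕ, Cm m) 0 ≠ 0) :
    1 ≤ Module.rank ℂ (Wspace M) ∧ Module.rank ℂ (Wspace M) ≤ (m : Cardinal) := by
  classical
  set N : Submodule ℂ (H2 m) := M ⊓ LinearMap.range (S m : H2 m →ₗ[ℂ] H2 m) with hN
  have hNclosed : IsClosed (N : Set (H2 m)) := by
    have : (N : Set (H2 m)) = (M : Set (H2 m)) ∩ (LinearMap.range (S m : H2 m →ₗ[ℂ] H2 m) : Set (H2 m)) := rfl
    rw [this]
    exact hclosed.inter isClosed_range_S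
  haveI : CompleteSpace N := hNclosed.completeSpace_coe
  -- key fact: f ∈ W with (f 0 = 0) implies f = 0
  have hinj : ∀ f ∈ Wspace M, (f : ∀ _, Cm m) 0 = 0 → f = 0 := by
    intro f hf h0
    obtain ⟨hfM, hfO⟩ := hf
    have hfN : f ∈ N := ⟨hfM, (mem_range_S_iff f).mpr h0⟩
    have : inner (𝕜 := ℂ) f f = 0 := hfO f hfN
    exact inner_self_eq_zero.mp this
  constructor
  · -- lower bound: W is nontrivial
    obtain ⟨F, hFM, hF0⟩ := hnv
    set G : H2 m := F - (N.orthogonalProjectionOnto F : H2 m) with hG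
    have hPN : ((N.orthogonalProjectionOnto F : H2 m)) ∈ N := (N.orthogonalProjectionOnto F).2
    have hGW : G ∈ Wspace M := by
      constructor
      · exact M.sub_mem hFM hPN.1
      · exact N.sub_starProjection_mem_orthogonal F
    have hG0 : (G : ∀ _, Cm m) 0 ≠ 0 := by
      have hP0 : ((N.orthogonalProjectionOnto F : H2 m) : ∀ _, Cm m) 0 = 0 :=
        (mem_range_S_iff _).mp hPN.2
      have : (G : ∀ _, Cm m) 0 = (F : ∀ _, Cm m) 0 := by
        have hsub : (G : ∀ _, Cm m) 0
            = (F : ∀ _, Cm m) 0 - ((N.orthogonalProjectionOnto F : H2 m) : ∀ _, Cm m) 0 := by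
          simp [hG, lp.coeFn_sub, Pi.sub_apply]
        rw [hsub, hP0, sub_zero]
      rw [this]; exact hF0
    have hGne : G ≠ 0 := by
      intro h
      apply hG0
      rw [h]
      rfl
    have : Nontrivial (Wspace M) := ⟨⟨⟨G, hGW⟩, 0, by simp [hGne]⟩⟩
    exact Cardinal.one_le_iff_pos.mpr rank_pos
  · -- upper bound: evaluation at 0 is injective on W
    set φ : (Wspace M) →ₗ[ℂ] Cm m :=
      (eval0 m).toLinearMap.comp (Wspace M).subtype with hφ
    have hφinj : Function.Injective φ := by
      rw [← LinearMap.ker_eq_bot]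
      ext f
      simp only [LinearMap.mem_ker, Submodule.mem_bot]
      constructor
      · intro h
        have := hinj f.1 f.2 h
        exact Subtype.ext this
      · rintro rfl; simp
    have h1 : Module.rank ℂ (Wspace M) ≤ Module.rank ℂ (Cm m) :=
      LinearMap.rank_le_of_injective φ hφinj
    have h2 : Module.rank ℂ (Cm m) = (m : Cardinal) := by
      rw [← Module.finrank_eq_rank]
      norm_cast
      simp [finrank_euclideanSpace_fin]
    rwa [h2] at h1
end
end

section
/- Let Θ ∈ H^∞(𝔻, L(ℂ^{r'}, ℂ^r)) be an inner multiplier and let K_Θ = H²(𝔻, ℂ^r) ⊖ Θ H²(𝔻, ℂ^{r'}) be the associated model space. If {e_1, …, e_{r'}} is an orthonormal basis of ℂ^{r'} and Θ̃_i = Θ e_i ∈ H²(𝔻, ℂ^r), then S K_Θ ⊆ K_Θ + span{Θ̃_1, …, Θ̃_{r'}}, where S is the forward shift on H²(𝔻, ℂ^r). In particular K_Θ is almost invariant for S with defect at most r'. -/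
noncomputable section

open scoped ENNReal ComplexConjugate
open ContinuousLinearMap

namespace Hardy
section Aux

local notation "⟪" x ", " y "⟫" => @inner ℂ _ _ x y

variable {m r : ℕ}

lemma S_coe (f : H2 m) : ((S m f : H2 m) : ∀ _, Cm m) = shiftFun (f : ∀ _, Cm m) := rfl

lemma S_single (n : ℕ) (v : Cm m) : S m (lp.single 2 n v) = lp.single 2 (n + 1) v := by
  apply Subtype.ext
  funext k
  show shiftFun ((lp.single 2 n v : H2 m) : ∀ _, Cm m) k = _
  cases k with
  | zero => rw [lp.single_apply, Pi.single_apply, if_neg (by omega)]; rfl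
  | succ j =>
    show ((lp.single 2 n v : H2 m) : ∀ _, Cm m) j = _
    rcases eq_or_ne j n with rfl | hj
    · rw [lp.single_apply_self, lp.single_apply_self]
    · rw [lp.single_apply_ne _ _ _ hj, lp.single_apply_ne _ _ _ (by omega)]

lemma inner_S_S (g h : H2 m) : ⟪S m g, S m h⟫ = ⟪g, h⟫ := by
  rw [lp.inner_eq_tsum, lp.inner_eq_tsum]
  have hsum : Summable fun n : ℕ => ⟪(S m g : ∀ _, Cm m) n, (S m h : ∀ _, Cm m) n⟫ :=
    lp.summable_inner (S m g) (S m h)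
  rw [hsum.tsum_eq_zero_add]
  simp only [S_coe]
  simp [shiftFun]

lemma Sadj_S (f : H2 m) : Sadj m (S m f) = f := by
  refine ext_inner_right ℂ fun v => ?_
  rw [Sadj, ContinuousLinearMap.adjoint_inner_left, inner_S_S]

lemma eq_const_of_Sadj_eq_zero {h : H2 m} (hh : Sadj m h = 0) :
    h = ∑ i : Fin m, ((h : ∀ _, Cm m) 0 i) • e m i := by
  have hcoef : ∀ n : ℕ, (h : ∀ _, Cm m) (n + 1) = 0 := by
    intro n
    have key : ∀ v : Cm m, ⟪v, (h : ∀ _, Cm m) (n + 1)⟫ = 0 := by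
      intro v
      have h1 : ⟪lp.single 2 (n + 1) v, h⟫ = ⟪v, (h : ∀ _, Cm m) (n + 1)⟫ :=
        lp.inner_single_left _ _ _
      have h2 : ⟪S m (lp.single 2 n v), h⟫ = ⟪lp.single 2 n v, Sadj m h⟫ :=
        (ContinuousLinearMap.adjoint_inner_right _ _ _).symm
      rw [S_single, hh, inner_zero_right] at h2
      rw [← h1, h2]
    have := key ((h : ∀ _, Cm m) (n + 1))
    rwa [inner_self_eq_zero] at this
  apply Subtype.ext
  funext n
  have hsum : ((∑ i : Fin m, ((h : ∀ _, Cm m) 0 i) • e m i : H2 m) : ∀ _, Cm m) n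
      = ∑ i : Fin m, ((h : ∀ _, Cm m) 0 i) • ((e m i : H2 m) : ∀ _, Cm m) n := by
    rw [lp.coeFn_sum, Finset.sum_apply]
    exact Finset.sum_congr rfl fun i _ => by rw [lp.coeFn_smul]; rfl
  rw [hsum]
  cases n with
  | zero =>
    have : ∀ i : Fin m, ((e m i : H2 m) : ∀ _, Cm m) 0 = EuclideanSpace.single i 1 :=
      fun i => lp.single_apply_self _ _ _
    simp only [this]
    ext j
    have hap : (∑ x : Fin m, ((h : ∀ _, Cm m) 0 x) • EuclideanSpace.single x (1:ℂ)) j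
        = ∑ x : Fin m, (((h : ∀ _, Cm m) 0 x) • EuclideanSpace.single x (1:ℂ)) j :=
      by rw [WithLp.ofLp_sum, Finset.sum_apply]
    rw [hap]
    simp only [PiLp.smul_apply, EuclideanSpace.single_apply, smul_eq_mul, mul_ite, mul_one,
      mul_zero, Finset.sum_ite_eq]
    simp
  | succ k =>
    have : ∀ i : Fin m, ((e m i : H2 m) : ∀ _, Cm m) (k + 1) = 0 :=
      fun i => lp.single_apply_ne _ _ _ (by omega)
    simp [this, hcoef]

end Aux
end Hardy

section Main

local notation "⟪" x ", " y "⟫" => @inner ℂ _ _ x y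

set_option maxHeartbeats 2000000 in
open Hardy in
/-- For an inner multiplier `Θ : H²(ℂ^{r'}) → H²(ℂ^r)` with model space `K_Θ` and
`Θ̃ᵢ = Θ eᵢ`, one has `S K_Θ ⊆ K_Θ + span{Θ̃ᵢ}`; in particular `K_Θ` is almost invariant
for the shift `S` with defect at most `r'`. -/
theorem stmt_3 (r r' : ℕ) (T : H2 r' →L[ℂ] H2 r) (hT : IsInnerMultiplier T) :
    (∀ f ∈ modelSpace T,
      S r f ∈ modelSpace T ⊔ Submodule.span ℂ (Set.range fun i : Fin r' => T (e r' i))) ∧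
    ∃ F : Submodule ℂ (H2 r), Module.rank ℂ F ≤ (r' : Cardinal) ∧
      ∀ f ∈ modelSpace T, S r f ∈ modelSpace T ⊔ F := by
  classical
  have key : ∀ f ∈ modelSpace T,
      S r f ∈ modelSpace T ⊔ Submodule.span ℂ (Set.range fun i : Fin r' => T (e r' i)) := by
    intro f hf
    obtain ⟨hiso, hmul⟩ := hT
    have hinner : ∀ x y : H2 r', ⟪T x, T y⟫ = ⟪x, y⟫ :=
      (LinearMap.norm_map_iff_inner_map_map T).mp hiso
    set h : H2 r' := ContinuousLinearMap.adjoint T (S r f) with hdef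
    have hTadj_f : ContinuousLinearMap.adjoint T f = 0 := by
      refine ext_inner_right ℂ fun v => ?_
      rw [ContinuousLinearMap.adjoint_inner_left, inner_zero_left]
      have h0 := (Submodule.mem_orthogonal (LinearMap.range (T : H2 r' →ₗ[ℂ] H2 r)) f).mp hf (T v) ⟨v, rfl⟩
      rw [← inner_conj_symm, h0, map_zero]
    have hSh : Sadj r' h = 0 := by
      have hc := congrArg ContinuousLinearMap.adjoint hmul
      rw [ContinuousLinearMap.adjoint_comp, ContinuousLinearMap.adjoint_comp] at hc
      have h1 : Sadj r' h = ContinuousLinearMap.adjoint T (Sadj r (S r f)) := by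
        rw [hdef, ← ContinuousLinearMap.comp_apply, ← ContinuousLinearMap.comp_apply, Sadj, Sadj,
          ← hc]
        simp only [ContinuousLinearMap.comp_apply]
      rw [h1, Sadj_S, hTadj_f]
    have hrep := eq_const_of_Sadj_eq_zero hSh
    have hu : S r f - T h ∈ modelSpace T := by
      rw [modelSpace, Submodule.mem_orthogonal]
      rintro w ⟨g, rfl⟩
      rw [inner_sub_right]
      have h2 : ⟪T g, T h⟫ = ⟪T g, S r f⟫ := by
        rw [hinner g h, hdef, ContinuousLinearMap.adjoint_inner_right]
      rw [ContinuousLinearMap.coe_coe, h2, sub_self]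
    have hv : T h ∈ Submodule.span ℂ (Set.range fun i : Fin r' => T (e r' i)) := by
      have hTh : T h = ∑ i : Fin r', ((h : ∀ _, Cm r') 0 i) • T (e r' i) := by
        conv_lhs => rw [hrep]
        rw [map_sum]
        exact Finset.sum_congr rfl fun i _ => by rw [map_smul]
      rw [hTh]
      exact Submodule.sum_mem _ fun i _ =>
        Submodule.smul_mem _ _ (Submodule.subset_span ⟨i, rfl⟩)
    have hsplit : S r f = (S r f - T h) + T h := (sub_add_cancel _ _).symm
    rw [hsplit]
    exact Submodule.add_mem _ (Submodule.mem_sup_left hu) (Submodule.mem_sup_right hv)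
  refine ⟨key, Submodule.span ℂ (Set.range fun i : Fin r' => T (e r' i)), ?_, key⟩
  calc Module.rank ℂ (Submodule.span ℂ (Set.range fun i : Fin r' => T (e r' i)))
      ≤ Cardinal.mk (Set.range fun i : Fin r' => T (e r' i)) := rank_span_le _
    _ ≤ Cardinal.mk (Fin r') := Cardinal.mk_range_le
    _ = r' := Cardinal.mk_fin r'

end Main
end
end

section
/- Let M ⊆ H²(𝔻, ℂ^m) be a closed subspace such that every F ∈ M with F(0) = 0 can be uniquely written F = F_0 K_0 + Σ_{j=1}^p z k_j E_j with ‖F‖² = ‖K_0‖² + Σ_j ‖k_j‖², where F_0 has columns forming an orthonormal basis {W_1,…,W_r} of M ⊖ (M ∩ zH²) consisting of bounded analytic functions, and {E_1,…,E_p} ⊆ H^∞(𝔻, ℂ^m) is an orthonormal basis of the defect space F. Then G ∈ M^⊥ if and only if T*_{F_0} G ⊕ T*_{E_1} S* G ⊕ ⋯ ⊕ T*_{E_p} S* G ∈ K^⊥, where K ⊆ H²(𝔻, ℂ^{r+p}) is the closed S*-invariant subspace of coefficient tuples (K_0, k_1, …, k_p) arising from elements of M, and K^⊥ is a closed shift-invariant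 subspace of H²(𝔻, ℂ^{r+p}). -/
noncomputable section

open scoped ENNReal ComplexConjugate
open ContinuousLinearMap

set_option maxHeartbeats 2000000 in
open Hardy in
/-- With `M = {F₀K₀ + Σⱼ z kⱼ Eⱼ : (K₀, k) ∈ K}` (unique norm-additive representations,
`K` closed and backward-shift invariant, columns of `F₀` an orthonormal basis of
`M ⊖ (M ∩ zH²)` and `{Eⱼ}` an orthonormal basis of the defect space), one has
`G ∈ Mᗮ` iff `T*_{F₀}G ⊕ T*_{E₁}S*G ⊕ ⋯ ⊕ T*_{E_p}S*G ∈ Kᗮ`. -/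
theorem stmt_18 (m r p : ℕ) (M : Submodule ℂ (H2 m)) (hclosed : IsClosed (M : Set (H2 m)))
    (TF0 : H2 r →L[ℂ] H2 m) (hF0mul : IsMultiplier TF0)
    (hWmem : ∀ i : Fin r, TF0 (e r i) ∈ Wspace M)
    (hWON : Orthonormal ℂ (fun i : Fin r => TF0 (e r i)))
    (hWspan : Submodule.span ℂ (Set.range fun i : Fin r => TF0 (e r i)) = Wspace M)
    (TE : Fin p → (H2 1 →L[ℂ] H2 m)) (hEmul : ∀ j, IsMultiplier (TE j))
    (hEON : Orthonormal ℂ (fun j : Fin p => TE j (e 1 0)))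
    (K : Submodule ℂ (H2 r × (Fin p → H2 1)))
    (hK : IsClosed (K : Set (H2 r × (Fin p → H2 1))))
    (hKinv : ∀ q ∈ K, (Sadj r q.1, fun j => Sadj 1 (q.2 j)) ∈ K)
    (hrep : ∀ F : H2 m, F ∈ M ↔ ∃ q ∈ K, F = TF0 q.1 + ∑ j, S m (TE j (q.2 j)))
    (hnormid : ∀ q ∈ K,
      ‖TF0 q.1 + ∑ j, S m (TE j (q.2 j))‖ ^ 2 = ‖q.1‖ ^ 2 + ∑ j, ‖q.2 j‖ ^ 2)
    (huniq : ∀ q ∈ K, ∀ q' ∈ K,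
      TF0 q.1 + ∑ j, S m (TE j (q.2 j)) = TF0 q'.1 + ∑ j, S m (TE j (q'.2 j)) → q = q') :
    ∀ G : H2 m, G ∈ Mᗮ ↔ ∀ q ∈ K,
      (inner ℂ (ContinuousLinearMap.adjoint TF0 G) q.1 : ℂ) +
        ∑ j, (inner ℂ (ContinuousLinearMap.adjoint (TE j) (Sadj m G)) (q.2 j) : ℂ) = 0 := by
  intro G
  have key : ∀ q : H2 r × (Fin p → H2 1),
      (inner ℂ (ContinuousLinearMap.adjoint TF0 G) q.1 : ℂ) +
        ∑ j, (inner ℂ (ContinuousLinearMap.adjoint (TE j) (Sadj m G)) (q.2 j) : ℂ)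
      = inner ℂ G (TF0 q.1 + ∑ j, S m (TE j (q.2 j))) := by
    intro q
    rw [inner_add_right, inner_sum]
    simp only [ContinuousLinearMap.adjoint_inner_left, Sadj]
  rw [Submodule.mem_orthogonal]
  constructor
  · intro h q hq
    have hF : TF0 q.1 + ∑ j, S m (TE j (q.2 j)) ∈ M := (hrep _).2 ⟨q, hq, rfl⟩
    have h0 := h _ hF
    rw [key q, ← inner_conj_symm, h0, map_zero]
  · intro h F hF
    obtain ⟨q, hq, rfl⟩ := (hrep F).1 hF
    have := h q hq
    rw [key q] at this
    rw [← inner_conj_symm, this, map_zero]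
end
end

section
/- Let F_0 ∈ H²(𝔻, L(ℂ^r, ℂ^m)) have columns {W_1, …, W_r} forming an orthonormal basis of W = M ⊖ (M ∩ zH²(𝔻, ℂ^m)) for a nearly S*-invariant subspace M of H²(𝔻, ℂ^m) (defect 0). Then for any inner multiplier Θ with K_Θ the corresponding model space as in the Chalendar–Chevrot–Partington theorem, the operator T_{F_0} : K_Θ → M, G ↦ P(F_0 G), is isometric: ‖T_{F_0} G‖ = ‖G‖ for all G ∈ K_Θ, where P is the projection of L¹-boundary functions onto H²(𝔻, ℂ^m). -/
noncomputable section

open scoped ENNReal ComplexConjugate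
open ContinuousLinearMap

namespace CCP
open Hardy

variable {m r r' : ℕ}

local notation "⟪" x ", " y "⟫" => @inner ℂ _ _ x y

lemma S_apply (f : H2 m) (n : ℕ) :
    ((S m f : H2 m) : ∀ _, Cm m) n = shiftFun (f : ∀ _, Cm m) n := rfl

lemma norm_sq_eq (f : H2 m) : ‖f‖ ^ 2 = ∑' n, ‖(f : ∀ _, Cm m) n‖ ^ 2 := by
  have h := lp.norm_rpow_eq_tsum (p := 2) (by norm_num) f
  rw [show (2 : ℝ≥0∞).toReal = ((2:ℕ):ℝ) by norm_num] at h
  simp_rw [Real.rpow_natCast] at h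
  exact h

lemma inner_S_S (f g : H2 m) : ⟪S m f, S m g⟫ = ⟪f, g⟫ := by
  rw [lp.inner_eq_tsum, lp.inner_eq_tsum,
    (lp.summable_inner (𝕜 := ℂ) (S m f) (S m g)).tsum_eq_zero_add]
  simp only [S_apply, shiftFun]
  simp

lemma norm_S (f : H2 m) : ‖S m f‖ = ‖f‖ := by
  rw [@norm_eq_sqrt_re_inner ℂ, @norm_eq_sqrt_re_inner ℂ (E := H2 m) _ _ _ f, inner_S_S]

/-- The backward shift as an explicit element. -/
lemma bshift_mem (f : H2 m) : Memℓp (fun n => (f : ∀ _, Cm m) (n + 1)) 2 := by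
  rw [memℓp_gen_iff (by norm_num)]
  have hs : Summable fun n : ℕ => ‖(f : ∀ _, Cm m) n‖ ^ (2 : ℝ≥0∞).toReal :=
    (lp.memℓp f).summable (by norm_num)
  exact (summable_nat_add_iff 1).mpr hs

def bshift (f : H2 m) : H2 m := ⟨fun n => (f : ∀ _, Cm m) (n + 1), bshift_mem f⟩

lemma bshift_apply (f : H2 m) (n : ℕ) :
    ((bshift f : H2 m) : ∀ _, Cm m) n = (f : ∀ _, Cm m) (n + 1) := rfl

lemma inner_left_S (f g : H2 m) : ⟪f, S m g⟫ = ⟪bshift f, g⟫ := by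
  rw [lp.inner_eq_tsum, lp.inner_eq_tsum,
    (lp.summable_inner (𝕜 := ℂ) f (S m g)).tsum_eq_zero_add]
  simp only [S_apply, shiftFun, bshift_apply]
  simp

lemma Sadj_eq (f : H2 m) : Sadj m f = bshift f := by
  refine ext_inner_right ℂ fun g => ?_
  rw [Sadj, ContinuousLinearMap.adjoint_inner_left, inner_left_S]

lemma decomp (f : H2 m) :
    f = const ((f : ∀ _, Cm m) 0) + S m (bshift f) := by
  apply Subtype.ext
  funext n
  have h : ((const ((f : ∀ _, Cm m) 0) + S m (bshift f) : H2 m) : ∀ _, Cm m) n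
      = (const ((f : ∀ _, Cm m) 0) : ∀ _, Cm m) n
        + ((S m (bshift f) : H2 m) : ∀ _, Cm m) n := by
    rw [lp.coeFn_add]; rfl
  rw [h]
  cases n with
  | zero => simp [S_apply, shiftFun, Hardy.const, lp.single_apply_self]
  | succ k =>
      have h2 : ((S m (bshift f) : H2 m) : ∀ _, Cm m) (k + 1)
          = (f : ∀ _, Cm m) (k + 1) := rfl
      rw [h2, Hardy.const, lp.single_apply_ne 2 0 _ (Nat.succ_ne_zero k)]
      simp

lemma inner_const_S (v : Cm m) (g : H2 m) : ⟪const v, S m g⟫ = 0 := by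
  rw [Hardy.const, lp.inner_single_left]
  have h0 : ((S m g : H2 m) : ∀ _, Cm m) 0 = 0 := rfl
  rw [h0, inner_zero_right]

lemma norm_const (v : Cm m) : ‖const v‖ = ‖v‖ := by
  simpa [Hardy.const] using lp.norm_single (E := fun _ : ℕ => Cm m) (p := 2) (by norm_num)
    0 v

lemma norm_sq_split (f : H2 m) :
    ‖f‖ ^ 2 = ‖(f : ∀ _, Cm m) 0‖ ^ 2 + ‖bshift f‖ ^ 2 := by
  conv_lhs => rw [decomp f]
  rw [@norm_add_sq ℂ, inner_const_S, norm_const, norm_S]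
  simp

lemma lp_single_zero (i : ℕ) :
    lp.single (E := fun _ : ℕ => Cm m) 2 i (0 : Cm m) = 0 := by
  have h := lp.single_smul (E := fun _ : ℕ => Cm m) 2 i (0 : ℂ) (0 : Cm m)
  simpa using h

lemma lp_single_add (i : ℕ) (a b : Cm m) :
    lp.single (E := fun _ : ℕ => Cm m) 2 i (a + b)
      = lp.single 2 i a + lp.single 2 i b := by
  apply Subtype.ext
  funext j
  have h : ((lp.single (E := fun _ : ℕ => Cm m) 2 i a + lp.single 2 i b : H2 m)
      : ∀ _, Cm m) j = lp.single (E := fun _ : ℕ => Cm m) 2 i a j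
        + lp.single (E := fun _ : ℕ => Cm m) 2 i b j := by
    rw [lp.coeFn_add]; rfl
  rw [h]
  by_cases hj : j = i
  · subst hj; simp [lp.single_apply_self]
  · simp [lp.single_apply_ne 2 i _ hj]

lemma lp_single_sum {ι : Type*} (s : Finset ι) (f : ι → Cm m) (i : ℕ) :
    lp.single (E := fun _ : ℕ => Cm m) 2 i (∑ x ∈ s, f x)
      = ∑ x ∈ s, lp.single 2 i (f x) := by
  classical
  induction s using Finset.induction with
  | empty => simpa using lp_single_zero i
  | insert x s hx ih =>
      rw [Finset.sum_insert hx, Finset.sum_insert hx, lp_single_add, ih]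

lemma const_eq_sum (v : Cm r) : const v = ∑ i : Fin r, v i • e r i := by
  have hv : ∑ i : Fin r, v i • EuclideanSpace.single i (1 : ℂ) = v := by
    have h := (EuclideanSpace.basisFun (Fin r) ℂ).sum_repr v
    simpa [EuclideanSpace.basisFun_apply, EuclideanSpace.basisFun_repr] using h
  calc const v = lp.single (E := fun _ : ℕ => Cm r) 2 0 (∑ i : Fin r, v i • EuclideanSpace.single i (1:ℂ)) := by
        rw [hv]; rfl
    _ = ∑ i : Fin r, lp.single (E := fun _ : ℕ => Cm r) 2 0 (v i • EuclideanSpace.single i (1:ℂ)) :=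
        lp_single_sum _ _ _
    _ = ∑ i : Fin r, v i • e r i := by
        refine Finset.sum_congr rfl fun i _ => ?_
        rw [lp.single_smul]; rfl

lemma norm_sq_orthonormal_sum {W : Fin r → H2 m} (hW : Orthonormal ℂ W)
    (v : Cm r) : ‖∑ i : Fin r, v i • W i‖ ^ 2 = ‖v‖ ^ 2 := by
  have h := hW.inner_sum v v Finset.univ
  have h1 : ‖∑ i : Fin r, v i • W i‖ ^ 2
      = Complex.re ⟪∑ i : Fin r, v i • W i, ∑ i : Fin r, v i • W i⟫ :=
    norm_sq_eq_re_inner (𝕜 := ℂ) _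
  rw [h1, h]
  have h2 : ∀ i : Fin r, conj (v i) * v i = ((‖v i‖ ^ 2 : ℝ) : ℂ) := fun i => by
    rw [RCLike.conj_mul]; norm_cast
  rw [Finset.sum_congr rfl fun i _ => h2 i]
  have h3 : ‖v‖ ^ 2 = ∑ i : Fin r, ‖v i‖ ^ 2 := by
    rw [EuclideanSpace.norm_eq, Real.sq_sqrt]
    positivity
  rw [h3, ← Complex.ofReal_sum, Complex.ofReal_re]


lemma modelSpace_Sadj {Θ : H2 r' →L[ℂ] H2 r} (hΘ : IsMultiplier Θ)
    {G : H2 r} (hG : G ∈ modelSpace Θ) : Sadj r G ∈ modelSpace Θ := by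
  rw [modelSpace, Submodule.mem_orthogonal]
  rintro u ⟨h, rfl⟩
  change ⟪Θ h, Sadj r G⟫ = 0
  have h1 : ⟪Sadj r G, Θ h⟫ = ⟪G, S r (Θ h)⟫ := by
    rw [Sadj, ContinuousLinearMap.adjoint_inner_left]
  have h2 : S r (Θ h) = Θ (S r' h) := DFunLike.congr_fun hΘ h
  have h3 : ⟪Θ (S r' h), G⟫ = 0 :=
    (Submodule.mem_orthogonal _ G).mp hG _ ⟨S r' h, rfl⟩
  have h4 : ⟪G, Θ (S r' h)⟫ = 0 := by rw [← inner_conj_symm, h3, map_zero]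
  rw [← inner_conj_symm, h1, h2, h4, map_zero]

lemma step {M : Submodule ℂ (H2 m)} (TF0 : H2 r →L[ℂ] H2 m)
    (hF0mul : IsMultiplier TF0)
    (hWmem : ∀ i : Fin r, TF0 (e r i) ∈ Wspace M)
    (hWON : Orthonormal ℂ (fun i : Fin r => TF0 (e r i)))
    {Θ : H2 r' →L[ℂ] H2 r}
    (hMrep : M = (modelSpace Θ).map (TF0 : H2 r →ₗ[ℂ] H2 m))
    {G : H2 r} (hG : G ∈ modelSpace Θ) :
    ‖TF0 G‖ ^ 2 = ‖(G : ∀ _, Cm r) 0‖ ^ 2 + ‖TF0 (Sadj r G)‖ ^ 2 := by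
  set v := (G : ∀ _, Cm r) 0 with hv
  have hS : ∀ x : H2 r, S m (TF0 x) = TF0 (S r x) := fun x =>
    DFunLike.congr_fun hF0mul x
  have hd : TF0 G = TF0 (const v) + S m (TF0 (Sadj r G)) := by
    rw [hS, Sadj_eq, ← map_add, ← decomp]
  have ha : TF0 (const v) = ∑ i : Fin r, v i • TF0 (e r i) := by
    rw [const_eq_sum, map_sum]
    simp
  have haW : TF0 (const v) ∈ Wspace M := by
    rw [ha]
    exact Submodule.sum_mem _ fun i _ => Submodule.smul_mem _ _ (hWmem i)
  have hbM : S m (TF0 (Sadj r G)) ∈ M ⊓ LinearMap.range (S m : H2 m →ₗ[ℂ] H2 m) := by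
    constructor
    · have h1 : TF0 G ∈ M := by rw [hMrep]; exact ⟨G, hG, rfl⟩
      have h2 : TF0 (const v) ∈ M := haW.1
      have h3 : S m (TF0 (Sadj r G)) = TF0 G - TF0 (const v) := by
        rw [hd]; abel
      rw [h3]; exact Submodule.sub_mem _ h1 h2
    · exact ⟨TF0 (Sadj r G), rfl⟩
  have horth : ⟪TF0 (const v), S m (TF0 (Sadj r G))⟫ = 0 :=
    Submodule.inner_left_of_mem_orthogonal hbM haW.2
  rw [hd, @norm_add_sq ℂ, horth, norm_S, ha, norm_sq_orthonormal_sum hWON]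
  simp

end CCP

open Hardy in
/-- If `M` is a nearly `S*`-invariant subspace of `H²(𝔻, ℂᵐ)` whose associated space
`W = M ⊖ (M ∩ zH²)` has orthonormal basis the columns of `F₀`, and `M = F₀ K_Θ` as in the
Chalendar–Chevrot–Partington theorem (`Θ` inner with `Θ(0) = 0`), then
`T_{F₀} : K_Θ → M` is isometric. -/
theorem stmt_19 (m r r' : ℕ) (M : Submodule ℂ (H2 m))
    (hclosed : IsClosed (M : Set (H2 m)))
    (hnearly : ∀ F ∈ M, (F : ∀ _ : ℕ, Cm m) 0 = 0 → Sadj m F ∈ M)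
    (TF0 : H2 r →L[ℂ] H2 m) (hF0mul : IsMultiplier TF0)
    (hWmem : ∀ i : Fin r, TF0 (e r i) ∈ Wspace M)
    (hWON : Orthonormal ℂ (fun i : Fin r => TF0 (e r i)))
    (hWspan : Submodule.span ℂ (Set.range fun i : Fin r => TF0 (e r i)) = Wspace M)
    (Θ : H2 r' →L[ℂ] H2 r) (hΘ : IsInnerMultiplier Θ)
    (hΘ0 : ∀ f : H2 r', ((Θ f : H2 r) : ∀ _ : ℕ, Cm r) 0 = 0)
    (hMrep : M = (modelSpace Θ).map (TF0 : H2 r →ₗ[ℂ] H2 m)) :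
    ∀ G ∈ modelSpace Θ, ‖TF0 G‖ = ‖G‖ := by
  intro G hG
  set g : ℕ → H2 r := fun n => (fun x => Sadj r x)^[n] G with hg
  have hg0 : g 0 = G := rfl
  have hgs : ∀ n, g (n + 1) = Sadj r (g n) := fun n =>
    Function.iterate_succ_apply' _ _ _
  have hmem : ∀ n, g n ∈ modelSpace Θ := by
    intro n
    induction n with
    | zero => exact hG
    | succ k ih => rw [hgs]; exact CCP.modelSpace_Sadj hΘ.2 ih
  have hcoef : ∀ n k, ((g n : H2 r) : ∀ _, Cm r) k = (G : ∀ _, Cm r) (k + n) := by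
    intro n
    induction n with
    | zero => intro k; rw [hg0, Nat.add_zero]
    | succ j ih =>
        intro k
        rw [hgs, CCP.Sadj_eq, CCP.bshift_apply, ih, show k + 1 + j = k + (j + 1) by omega]
  have hinv : ∀ n, ‖TF0 G‖ ^ 2 - ‖G‖ ^ 2 = ‖TF0 (g n)‖ ^ 2 - ‖g n‖ ^ 2 := by
    intro n
    induction n with
    | zero => rw [hg0]
    | succ j ih =>
        rw [ih, hgs]
        have h1 := CCP.step TF0 hF0mul hWmem hWON hMrep (hmem j)
        have h2 := CCP.norm_sq_split (g j)
        rw [← CCP.Sadj_eq] at h2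
        linarith
  have hnorm : ∀ n, ‖g n‖ ^ 2 = ∑' k, ‖(G : ∀ _, Cm r) (k + n)‖ ^ 2 := by
    intro n
    rw [CCP.norm_sq_eq]
    exact tsum_congr fun k => by rw [hcoef]
  have t1 : Filter.Tendsto (fun n => ‖g n‖ ^ 2) Filter.atTop (nhds 0) := by
    have h := tendsto_sum_nat_add (fun k => ‖(G : ∀ _, Cm r) k‖ ^ 2)
    have heq : (fun n : ℕ => ‖g n‖ ^ 2)
        = fun n => ∑' k, ‖(G : ∀ _, Cm r) (k + n)‖ ^ 2 := funext hnorm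
    rw [heq]
    exact h
  have t2 : Filter.Tendsto (fun n => ‖TF0 (g n)‖ ^ 2) Filter.atTop (nhds 0) := by
    have hb : ∀ n, ‖TF0 (g n)‖ ^ 2 ≤ ‖TF0‖ ^ 2 * ‖g n‖ ^ 2 := fun n => by
      calc ‖TF0 (g n)‖ ^ 2 ≤ (‖TF0‖ * ‖g n‖) ^ 2 :=
            pow_le_pow_left₀ (norm_nonneg _) (TF0.le_opNorm _) 2
        _ = ‖TF0‖ ^ 2 * ‖g n‖ ^ 2 := by ring
    have ht : Filter.Tendsto (fun n => ‖TF0‖ ^ 2 * ‖g n‖ ^ 2)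
        Filter.atTop (nhds 0) := by
      have h := t1.const_mul (‖TF0‖ ^ 2)
      rw [mul_zero] at h
      exact h
    exact squeeze_zero (fun n => sq_nonneg _) hb ht
  have t3 : Filter.Tendsto (fun n => ‖TF0 (g n)‖ ^ 2 - ‖g n‖ ^ 2)
      Filter.atTop (nhds 0) := by
    have h := t2.sub t1
    rw [sub_zero] at h
    exact h
  have hc : ‖TF0 G‖ ^ 2 - ‖G‖ ^ 2 = 0 := by
    have heq : (fun n => ‖TF0 (g n)‖ ^ 2 - ‖g n‖ ^ 2)
        = fun _ => ‖TF0 G‖ ^ 2 - ‖G‖ ^ 2 := funext fun n => (hinv n).symm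
    rw [heq] at t3
    exact tendsto_nhds_unique tendsto_const_nhds t3
  exact (sq_eq_sq₀ (norm_nonneg (TF0 G)) (norm_nonneg G)).mp (by linarith)
end
end
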